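/- If w is a finite word over {1,2} that occurs as a factor of the Kolakoski sequence, then its run-length derivative D(w) (run-length encoding after discarding boundary runs of length ≤ 1) also occurs as a factor of the Kolakoski sequence. -/

import Mathlib

namespace Kola

/-- Run-length encoding of a finite word as (letter, count) pairs. -/
def rle : List ℕ → List (ℕ × ℕ)
  | [] => []
  | a :: l =>
    match rle l with
    | [] => [(a, 1)]
    | (b, n) :: t => if a = b then (b, n + 1) :: t else (a, 1) :: (b, n) :: t

/-- Boundary adjustment for the first run: discard if length ≤ r, extend to s if length in (r,s]. -/
def fixRun (r s : ℕ) : List (ℕ × ℕ) → List (ℕ × ℕ)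
  | [] => []
  | (a, n) :: t => if n ≤ r then t else if n ≤ s then (a, s) :: t else (a, n) :: t

/-- The Kolakoski derivative over the alphabet {r,s}. -/
def D (r s : ℕ) (w : List ℕ) : List ℕ :=
  match rle w with
  | [] => []
  | [(_, n)] => if n < s then [] else [n]
  | ps => ((fixRun r s ((fixRun r s ps).reverse)).reverse).map Prod.snd

/-- A C∞-word over {r,s}: all iterated derivatives are words over {r,s}. -/
def IsCInf (r s : ℕ) (w : List ℕ) : Prop :=
  ∀ k : ℕ, ∀ a ∈ (D r s)^[k] w, a = r ∨ a = s

/-- `t` enumerates the starting indices of the (maximal) runs of the sequence `z`. -/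
def IsRunPartition (z : ℕ → ℕ) (t : ℕ → ℕ) : Prop :=
  t 0 = 0 ∧ StrictMono t ∧
  (∀ k i, t k ≤ i → i < t (k + 1) → z i = z (t k)) ∧
  (∀ k, z (t (k + 1)) ≠ z (t k))

/-- `w` is the run-length sequence of `z`. -/
def IsRunLengthSeq (z w : ℕ → ℕ) : Prop :=
  ∃ t, IsRunPartition z t ∧ ∀ k, w k = t (k + 1) - t k

/-- A Kolakoski sequence over {r,s}: a sequence over {r,s} equal to its own run-length sequence. -/
def IsKolakoski (r s : ℕ) (z : ℕ → ℕ) : Prop :=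
  (∀ n, z n = r ∨ z n = s) ∧ IsRunLengthSeq z z

def EventuallyPeriodic (z : ℕ → ℕ) : Prop :=
  ∃ m q : ℕ, 1 ≤ q ∧ ∀ i, m ≤ i → z (i + q) = z i

/-- `w` occurs as a factor of the infinite sequence `z`. -/
def FactorOf (w : List ℕ) (z : ℕ → ℕ) : Prop :=
  ∃ i, w = (List.range w.length).map fun k => z (i + k)

/-- Letter-exchange on words over {r,s}. -/
def exch (r s : ℕ) (w : List ℕ) : List ℕ := w.map fun a => if a = r then s else r

/-- Number of occurrences of `w` as a factor of the prefix of length `n` of `z`. -/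
def countOcc (z : ℕ → ℕ) (w : List ℕ) (n : ℕ) : ℕ :=
  ((Finset.range n).filter fun i => i + w.length ≤ n ∧ ∀ k < w.length, z (i + k) = w.getD k 0).card

/-- All words of length n over {r,s}. -/
def allWords (r s : ℕ) : ℕ → Finset (List ℕ)
  | 0 => {[]}
  | n + 1 => (allWords r s n).image (List.cons r) ∪ (allWords r s n).image (List.cons s)


/-! ### Auxiliary material -/

/-- The window of length `n` of `z` starting at `i`. -/
def win (z : ℕ → ℕ) (i n : ℕ) : List ℕ := (List.range n).map fun k => z (i + k)

lemma win_length (z : ℕ → ℕ) (i n : ℕ) : (win z i n).length = n := by simp [win]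

lemma factor_win (z : ℕ → ℕ) (i n : ℕ) : FactorOf (win z i n) z :=
  ⟨i, by simp [win]⟩

lemma win_add (z : ℕ → ℕ) (i m n : ℕ) :
    win z i (m + n) = win z i m ++ win z (i + m) n := by
  simp only [win, List.range_add, List.map_append, List.map_map]
  congr 1
  apply List.map_congr_left
  intro k _
  simp [Function.comp, Nat.add_assoc]

lemma win_succ (z : ℕ → ℕ) (i n : ℕ) : win z i (n + 1) = z i :: win z (i + 1) n := by
  have h := win_add z i 1 n
  rw [Nat.add_comm 1 n] at h
  rw [h]
  rfl

lemma win_snoc (z : ℕ → ℕ) (i n : ℕ) : win z i (n + 1) = win z i n ++ [z (i + n)] := by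
  rw [win_add]
  rfl

lemma rle_fst_head : ∀ v : List ℕ, (rle v).head?.map Prod.fst = v.head?
  | [] => rfl
  | a :: l => by
    show (match rle l with
      | [] => [(a, 1)]
      | (b, n) :: t => if a = b then (b, n + 1) :: t else (a, 1) :: (b, n) :: t).head?.map Prod.fst
        = some a
    rcases h : rle l with _ | ⟨⟨b, n⟩, t⟩ <;> simp
    split <;> simp_all

lemma rle_rep : ∀ (m : ℕ) (c : ℕ) (v : List ℕ), m ≠ 0 → (∀ x ∈ v.head?, x ≠ c) →
    rle (List.replicate m c ++ v) = (c, m) :: rle v := by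
  intro m
  induction m with
  | zero => intro _ _ h; exact absurd rfl h
  | succ m ih =>
    intro c v _ hv
    rcases Nat.eq_zero_or_pos m with hm | hm
    · subst hm
      show rle (c :: v) = (c, 1) :: rle v
      show (match rle v with
        | [] => [(c, 1)]
        | (b, n) :: t => if c = b then (b, n + 1) :: t else (c, 1) :: (b, n) :: t)
          = (c, 1) :: rle v
      rcases h : rle v with _ | ⟨⟨b, n⟩, t⟩
      · rfl
      · have hb : some b = v.head? := by
          have := rle_fst_head v
          rw [h] at this
          simpa using this
        have : b ≠ c := hv b (by rw [← hb]; rfl)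
        simp [Ne.symm this]
    · have : List.replicate (m + 1) c ++ v = c :: (List.replicate m c ++ v) := by
        simp [List.replicate_succ]
      rw [this]
      show (match rle (List.replicate m c ++ v) with
        | [] => [(c, 1)]
        | (b, n) :: t => if c = b then (b, n + 1) :: t else (c, 1) :: (b, n) :: t)
          = (c, m + 1) :: rle v
      rw [ih c v (by omega) hv]
      simp

lemma rle_replicate (c n : ℕ) (hn : n ≠ 0) : rle (List.replicate n c) = [(c, n)] := by
  have := rle_rep n c [] hn (by simp)
  simpa [rle] using this

lemma D_nil : D 1 2 [] = [] := rfl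

lemma D_single (w : List ℕ) (c n : ℕ) (h : rle w = [(c, n)]) :
    D 1 2 w = if n < 2 then [] else [n] := by
  unfold D
  rw [h]

lemma D_big (w : List ℕ) (p q : ℕ × ℕ) (L : List (ℕ × ℕ)) (h : rle w = p :: q :: L) :
    D 1 2 w = ((fixRun 1 2 ((fixRun 1 2 (p :: q :: L)).reverse)).reverse).map Prod.snd := by
  unfold D
  rw [h]


/-- If `w` occurs as a factor of the Kolakoski sequence over {1,2},
then so does its derivative `D w`. -/

theorem derivative_factor (z : ℕ → ℕ) (hz : IsKolakoski 1 2 z) (h0 : z 0 = 2)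
    (w : List ℕ) (hw : FactorOf w z) :
    FactorOf (D 1 2 w) z := by
  obtain ⟨h12, t, ⟨ht0, htm, hconst, hdiff⟩, hlen⟩ := hz
  -- basic facts about the run partition
  have hstep : ∀ k, t (k + 1) = t k + z k := by
    intro k
    have h1 := hlen k
    have h2 : t k < t (k + 1) := htm (by omega)
    omega
  have hz12 : ∀ k, z k = 1 ∨ z k = 2 := h12
  have hfind : ∀ i : ℕ, ∃ k, t k ≤ i ∧ i < t (k + 1) := by
    intro i
    refine ⟨Nat.findGreatest (fun k => t k ≤ i) i, ?_, ?_⟩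
    · exact Nat.findGreatest_spec (P := fun k => t k ≤ i) (Nat.zero_le i) (show t 0 ≤ i by rw [ht0]; exact Nat.zero_le i)
    · set K := Nat.findGreatest (fun k => t k ≤ i) i with hK
      by_contra hc
      push_neg at hc
      have hKle : K ≤ i := Nat.findGreatest_le i
      have h1 : K + 1 ≤ t (K + 1) := htm.le_apply
      have h2 : K + 1 ≤ i := by omega
      have hgg := Nat.findGreatest_is_greatest (P := fun k => t k ≤ i) (n := i)
        (k := K + 1) (by omega) h2
      exact hgg hc
  obtain ⟨i, hwin⟩ := hw
  set n := w.length with hn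
  have hw' : w = win z i n := hwin
  -- the key computation of the run-length encoding of a window
  have key : ∀ d a i n, 1 ≤ n → t a ≤ i → i < t (a + 1) → t (a + d) < i + n →
      i + n ≤ t (a + d + 1) →
      rle (win z i n) = if d = 0 then [(z (t a), n)]
        else (z (t a), t (a + 1) - i) ::
          ((List.range (d - 1)).map fun j => (z (t (a + 1 + j)), z (a + 1 + j))) ++
          [(z (t (a + d)), i + n - t (a + d))] := by
    intro d
    induction d with
    | zero =>
      intro a i n hn1 h1 h2 h3 h4
      simp only [Nat.add_zero] at h3 h4
      rw [if_pos rfl]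
      have hrep : win z i n = List.replicate n (z (t a)) := by
        unfold win
        have : ∀ k ∈ List.range n, z (i + k) = z (t a) := by
          intro k hk
          rw [List.mem_range] at hk
          exact hconst a (i + k) (by omega) (by omega)
        rw [List.map_congr_left this]
        simp
      rw [hrep, rle_replicate _ _ (by omega)]
    | succ d ih =>
      intro a i n hn1 h1 h2 h3 h4
      set m1 := t (a + 1) - i with hm1
      have hAB : t (a + 1) ≤ t (a + (d + 1)) := htm.monotone (by omega)
      have hadd : a + (d + 1) = a + d + 1 := by omega
      rw [hadd] at hAB h3 h4
      have hm1n : m1 < n := by omega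
      have hsplit : win z i n = List.replicate m1 (z (t a)) ++ win z (t (a + 1)) (n - m1) := by
        have h5 : win z i n = win z i m1 ++ win z (i + m1) (n - m1) := by
          rw [← win_add]
          congr 1
          omega
        have h6 : win z i m1 = List.replicate m1 (z (t a)) := by
          unfold win
          have : ∀ k ∈ List.range m1, z (i + k) = z (t a) := by
            intro k hk
            rw [List.mem_range] at hk
            exact hconst a (i + k) (by omega) (by omega)
          rw [List.map_congr_left this]
          simp
        have h7 : i + m1 = t (a + 1) := by omega
        rw [h5, h6, h7]
      have hhead : ∀ x ∈ (win z (t (a + 1)) (n - m1)).head?, x ≠ z (t a) := by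
        have h8 : n - m1 = (n - m1 - 1) + 1 := by omega
        rw [h8, win_succ]
        intro x hx
        simp only [List.head?_cons, Option.mem_def, Option.some.injEq] at hx
        rw [← hx]
        exact hdiff a
      rw [hsplit, rle_rep m1 (z (t a)) _ (by omega) hhead]
      have hIH := ih (a + 1) (t (a + 1)) (n - m1) (by omega) le_rfl (htm (by omega))
        (by rw [show a + 1 + d = a + d + 1 by omega]; omega)
        (by rw [show a + 1 + d + 1 = a + d + 1 + 1 by omega]
            have := htm.monotone (show a + d + 1 ≤ a + d + 1 + 1 by omega)
            omega)
      rw [hIH]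
      rw [if_neg (by omega : ¬ (d + 1 = 0)), hadd]
      rcases Nat.eq_zero_or_pos d with hd | hd
      · subst hd
        rw [if_pos rfl]
        have e2 : n - m1 = i + n - t (a + 1) := by omega
        simp [e2]
      · rw [if_neg (by omega : ¬ d = 0)]
        congr 1
        rw [show d + 1 - 1 = (d - 1) + 1 by omega, List.range_succ_eq_map]
        simp only [List.map_cons, List.map_map, List.cons_append, Nat.add_zero]
        congr 1
        · rw [hlen (a + 1)]
        · congr 1
          · apply List.map_congr_left
            intro j _
            simp only [Function.comp_apply, Nat.succ_eq_add_one]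
            rw [show a + 1 + (j + 1) = a + 1 + 1 + j by omega]
          · rw [show a + 1 + d = a + d + 1 by omega,
              show t (a + 1) + (n - m1) - t (a + d + 1) = i + n - t (a + d + 1) by omega]
  -- now assemble
  rcases Nat.eq_zero_or_pos n with hn0 | hn0
  · have : w = [] := by rw [hw', hn0]; rfl
    rw [this, D_nil]
    exact ⟨0, by simp⟩
  · obtain ⟨a, ha1, ha2⟩ := hfind i
    obtain ⟨b, hb1, hb2⟩ := hfind (i + n - 1)
    have hab : a ≤ b := by
      by_contra hc
      push_neg at hc
      have : t (b + 1) ≤ t a := htm.monotone (by omega)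
      omega
    set d := b - a with hd
    have hb : b = a + d := by omega
    have hkey := key d a i n (by omega) ha1 ha2 (by rw [← hb]; omega) (by rw [← hb]; omega)
    rw [← hw'] at hkey
    rcases Nat.eq_zero_or_pos d with hd0 | hd0
    · -- window inside a single run
      rw [hd0, if_pos rfl] at hkey
      have hna : n ≤ 2 := by
        have := hlen a
        have := hz12 a
        rw [hb, hd0] at hb1 hb2
        simp only [Nat.add_zero] at hb1 hb2
        omega
      rw [D_single w _ _ hkey]
      rcases Nat.lt_or_ge n 2 with h | h
      · rw [if_pos h]
        exact ⟨0, by simp⟩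
      · rw [if_neg (by omega)]
        have : n = 2 := by omega
        rw [this]
        exact ⟨0, by simp [List.range_succ, h0]⟩
    · -- at least two runs
      rw [if_neg (by omega)] at hkey
      set c1 := z (t a) with hc1
      set c2 := z (t (a + d)) with hc2
      set m1 := t (a + 1) - i with hm1
      set m2 := i + n - t (a + d) with hm2
      set mid := (List.range (d - 1)).map (fun j => (z (t (a + 1 + j)), z (a + 1 + j)))
        with hmid
      have hmidsnd : mid.map Prod.snd = win z (a + 1) (d - 1) := by
        rw [hmid]
        simp [win, List.map_map, Function.comp]
      have hm1v : m1 = 1 ∨ m1 = 2 := by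
        have := hlen a
        have := hz12 a
        omega
      have hm2v : m2 = 1 ∨ m2 = 2 := by
        have := hlen (a + d)
        have := hz12 (a + d)
        rw [hb] at hb1 hb2
        omega
      have hza : m1 = 2 → z a = 2 := by
        intro h
        have := hlen a
        have := hz12 a
        omega
      have hzb : m2 = 2 → z (a + d) = 2 := by
        intro h
        have := hlen (a + d)
        have := hz12 (a + d)
        rw [hb] at hb1 hb2
        omega
      obtain ⟨q, L, hqL⟩ := List.exists_cons_of_ne_nil
        (show mid ++ [(c2, m2)] ≠ [] by simp)
      have hrle : rle w = (c1, m1) :: q :: L := by rw [hkey, List.cons_append, hqL]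
      have hD := D_big w _ _ _ hrle
      rw [← hqL] at hD
      rcases hm1v with hm1v | hm1v <;> rcases hm2v with hm2v | hm2v <;>
        rw [hm1v, hm2v] at hD
      · have : D 1 2 w = mid.map Prod.snd := by
          rw [hD]
          simp [fixRun, List.reverse_append]
        rw [this, hmidsnd]
        exact factor_win z (a + 1) (d - 1)
      · have hDe : D 1 2 w = mid.map Prod.snd ++ [2] := by
          rw [hD]
          simp [fixRun, List.reverse_append]
        have he : win z (a + 1) (d - 1 + 1) = win z (a + 1) (d - 1) ++ [2] := by
          rw [win_snoc, show a + 1 + (d - 1) = a + d by omega, hzb hm2v]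
        rw [hDe, hmidsnd, ← he]
        exact factor_win z (a + 1) (d - 1 + 1)
      · have hDe : D 1 2 w = 2 :: mid.map Prod.snd := by
          rw [hD]
          simp [fixRun, List.reverse_append]
        have he : win z a (d - 1 + 1) = 2 :: win z (a + 1) (d - 1) := by
          rw [win_succ, hza hm1v]
        rw [hDe, hmidsnd, ← he]
        exact factor_win z a (d - 1 + 1)
      · have hDe : D 1 2 w = 2 :: (mid.map Prod.snd ++ [2]) := by
          rw [hD]
          simp [fixRun, List.reverse_append]
        have he : win z a (d - 1 + 1 + 1) = 2 :: (win z (a + 1) (d - 1) ++ [2]) := by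
          rw [win_succ, win_snoc, show a + 1 + (d - 1) = a + d by omega,
            hza hm1v, hzb hm2v]
        rw [hDe, hmidsnd, ← he]
        exact factor_win z a (d - 1 + 1 + 1)

end Kola
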